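/- For every m ≥ 1, consider the set S ⊆ 𝔹^X over X = {0, 1, …, 2m−1} given by S = {v : X → Bool | v(2k) ≠ v(2k+1) for every k < m}. Every cube over X contained in S is a singleton; consequently, every family of pairwise disjoint cubes over X whose union equals S has exactly 2^m members. -/

import Mathlib

/-- A cube over a finite set `X` of propositions: the set of valuations agreeing
with a fixed partial assignment `f` on a set `D` of propositions. -/
def IsCube {X : Type*} (c : Set (X → Bool)) : Prop :=
  ∃ (D : Set X) (f : X → Bool), c = {v : X → Bool | ∀ x ∈ D, v x = f x}

private lemma bool_ne_ne : ∀ (a b c : Bool), a ≠ b → b ≠ c → a = c := by decide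

private lemma bool_ne_ne' : ∀ (a b c : Bool), a ≠ c → b ≠ c → a = b := by decide

private lemma bool_ne_eq : ∀ (a b : Bool), a ≠ b → b = !a := by decide

theorem cube_singleton (m : ℕ) (c : Set (Fin (2 * m) → Bool)) (hc : IsCube c)
    (hsub : ∀ v ∈ c, ∀ (k : ℕ) (hk : k < m),
      v ⟨2 * k, by have := hk; omega⟩ ≠ v ⟨2 * k + 1, by have := hk; omega⟩) : ∃ v, c = {v} := by
  obtain ⟨D, f, rfl⟩ := hc
  refine ⟨f, ?_⟩
  ext w
  simp only [Set.mem_setOf_eq, Set.mem_singleton_iff]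
  constructor
  · intro hw
    have hfc : f ∈ {v : Fin (2 * m) → Bool | ∀ x ∈ D, v x = f x} := fun x _ => rfl
    have key : ∀ (k : ℕ) (hk : k < m),
        w ⟨2 * k, by omega⟩ = f ⟨2 * k, by omega⟩ ∧
        w ⟨2 * k + 1, by omega⟩ = f ⟨2 * k + 1, by omega⟩ := by
      intro k hk
      have hab : (⟨2 * k, by omega⟩ : Fin (2 * m)) ≠ ⟨2 * k + 1, by omega⟩ := by
        rw [Fin.ne_iff_vne]; simp
      have hf := hsub f hfc k hk
      constructor
      · by_contra hxa
        have haD : (⟨2 * k, by omega⟩ : Fin (2 * m)) ∉ D := fun h => hxa (hw _ h)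
        have huc : Function.update f (⟨2 * k, by omega⟩ : Fin (2 * m))
            (w ⟨2 * k, by omega⟩) ∈
            {v : Fin (2 * m) → Bool | ∀ x ∈ D, v x = f x} := by
          intro y hy
          have hne : y ≠ ⟨2 * k, by omega⟩ := fun h => haD (h ▸ hy)
          simp [Function.update_of_ne hne]
        have hu2 := hsub _ huc k hk
        apply hu2
        rw [Function.update_self, Function.update_of_ne hab.symm]
        exact bool_ne_ne _ _ _ hxa hf
      · by_contra hxb
        have hbD : (⟨2 * k + 1, by omega⟩ : Fin (2 * m)) ∉ D := fun h => hxb (hw _ h)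
        have huc : Function.update f (⟨2 * k + 1, by omega⟩ : Fin (2 * m))
            (w ⟨2 * k + 1, by omega⟩) ∈
            {v : Fin (2 * m) → Bool | ∀ x ∈ D, v x = f x} := by
          intro y hy
          have hne : y ≠ ⟨2 * k + 1, by omega⟩ := fun h => hbD (h ▸ hy)
          simp [Function.update_of_ne hne]
        have hu2 := hsub _ huc k hk
        apply hu2
        rw [Function.update_self, Function.update_of_ne hab]
        exact bool_ne_ne' _ _ _ hf hxb
    funext x
    have hx2 := x.isLt
    rcases Nat.even_or_odd x.val with ⟨t, ht⟩ | ⟨t, ht⟩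
    · have hxe : x = (⟨2 * t, by omega⟩ : Fin (2 * m)) := Fin.ext (by simp; omega)
      rw [hxe]
      exact (key t (by omega)).1
    · have hxe : x = (⟨2 * t + 1, by omega⟩ : Fin (2 * m)) := Fin.ext (by simp; omega)
      rw [hxe]
      exact (key t (by omega)).2
  · rintro rfl
    exact fun x _ => rfl

theorem parity_ncard (m : ℕ) :
    ({v : Fin (2 * m) → Bool | ∀ (k : ℕ) (hk : k < m),
      v ⟨2 * k, by have := hk; omega⟩ ≠ v ⟨2 * k + 1, by have := hk; omega⟩}).ncard = 2 ^ m := by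
  set E : (Fin m → Bool) → (Fin (2 * m) → Bool) :=
    fun g i => if i.val % 2 = 0 then g ⟨i.val / 2, by have := i.isLt; omega⟩
      else !(g ⟨i.val / 2, by have := i.isLt; omega⟩) with hE
  have hinj : Function.Injective E := by
    intro g g' h
    funext j
    have := congrFun h ⟨2 * j.val, by have := j.isLt; omega⟩
    have h1 : (2 * j.val) % 2 = 0 := by omega
    have h2 : (2 * j.val) / 2 = j.val := by omega
    simp only [hE, h1, h2, if_pos] at this
    simpa using this
  have hrange : {v : Fin (2 * m) → Bool | ∀ (k : ℕ) (hk : k < m),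
      v ⟨2 * k, by omega⟩ ≠ v ⟨2 * k + 1, by omega⟩} = Set.range E := by
    ext v
    simp only [Set.mem_setOf_eq, Set.mem_range]
    constructor
    · intro hv
      refine ⟨fun j => v ⟨2 * j.val, by have := j.isLt; omega⟩, ?_⟩
      funext i
      have hi := i.isLt
      rcases Nat.even_or_odd i.val with he | ho
      · obtain ⟨t, ht⟩ := he
        have h1 : i.val % 2 = 0 := by omega
        simp only [hE, h1, if_pos]
        congr 1
        exact Fin.ext (by simp; omega)
      · obtain ⟨t, ht⟩ := ho
        have h1 : ¬ (i.val % 2 = 0) := by omega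
        simp only [hE, h1, if_neg, Bool.not_eq_true']
        have hkm : i.val / 2 < m := by omega
        have := hv (i.val / 2) hkm
        have hie : (⟨2 * (i.val / 2) + 1, by omega⟩ : Fin (2 * m)) = i :=
          Fin.ext (by simp; omega)
        rw [hie] at this
        have := bool_ne_eq _ _ this
        rw [this]
        rfl
    · rintro ⟨g, rfl⟩
      intro k hk
      have h1 : (2 * k) % 2 = 0 := by omega
      have h2 : (2 * k) / 2 = k := by omega
      have h3 : ¬ ((2 * k + 1) % 2 = 0) := by omega
      have h4 : (2 * k + 1) / 2 = k := by omega
      simp [hE, h1, h2, h3, h4]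
  rw [hrange, ← Nat.card_coe_set_eq, Nat.card_range_of_injective hinj,
    Nat.card_eq_fintype_card]
  simp

/-- for `m ≥ 1` and `S = {v : Fin (2m) → Bool | v(2k) ≠ v(2k+1)
for all k < m}`, every cube contained in `S` is a singleton; consequently every
family of pairwise disjoint cubes whose union is `S` has exactly `2^m` members. -/
theorem parity_set_cubes (m : ℕ) (hm : 1 ≤ m) :
    (∀ c : Set (Fin (2 * m) → Bool), IsCube c →
        c ⊆ {v : Fin (2 * m) → Bool | ∀ (k : ℕ) (hk : k < m),
              v ⟨2 * k, by omega⟩ ≠ v ⟨2 * k + 1, by omega⟩} →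
        ∃ v, c = {v}) ∧
    (∀ 𝒞 : Set (Set (Fin (2 * m) → Bool)),
        (∀ c ∈ 𝒞, IsCube c) →
        (∀ c ∈ 𝒞, ∀ c' ∈ 𝒞, c ≠ c' → c ∩ c' = ∅) →
        ⋃₀ 𝒞 = {v : Fin (2 * m) → Bool | ∀ (k : ℕ) (hk : k < m),
              v ⟨2 * k, by omega⟩ ≠ v ⟨2 * k + 1, by omega⟩} →
        𝒞.ncard = 2 ^ m) := by
  constructor
  · intro c hc hsub
    exact cube_singleton m c hc (fun v hv => hsub hv)
  · intro 𝒞 hcube hdisj huni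
    have hsingle : ∀ c ∈ 𝒞, ∃ v, c = {v} := by
      intro c hcm
      refine cube_singleton m c (hcube c hcm) (fun v hv => ?_)
      have : v ∈ ⋃₀ 𝒞 := ⟨c, hcm, hv⟩
      rw [huni] at this
      exact this
    have himg : 𝒞 = (fun v => ({v} : Set (Fin (2 * m) → Bool))) ''
        {v : Fin (2 * m) → Bool | ∀ (k : ℕ) (hk : k < m),
          v ⟨2 * k, by omega⟩ ≠ v ⟨2 * k + 1, by omega⟩} := by
      ext c
      simp only [Set.mem_image]
      constructor
      · intro hcm
        obtain ⟨v, rfl⟩ := hsingle c hcm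
        have hv : v ∈ ⋃₀ 𝒞 := ⟨{v}, hcm, rfl⟩
        rw [huni] at hv
        exact ⟨v, hv, rfl⟩
      · rintro ⟨v, hv, rfl⟩
        rw [← huni] at hv
        obtain ⟨c', hc'm, hvc'⟩ := hv
        obtain ⟨w, rfl⟩ := hsingle c' hc'm
        obtain rfl : v = w := hvc'
        exact hc'm
    rw [himg, Set.ncard_image_of_injective _ (fun a b h => by
      simpa using h)]
    exact parity_ncard m
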